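/- For d×d matrices A and B, the map Λ(A,B) = tr_{123}[F (A ⊗ B ⊗ C ⊗ 1)] with F = (1/6){2[(14)^{T_4} + (24)^{T_4} + (34)^{T_4}] − [(123)(14)^{T_4} + (123)(24)^{T_4} + (123)(34)^{T_4} + (132)(14)^{T_4} + (132)(24)^{T_4} + (132)(34)^{T_4}]} evaluated on three matrices A, B, C equals (1/3)[tr(B)tr(C)A^T + tr(A)tr(C)B^T + tr(A)tr(B)C^T] − (1/6)[(ACB)^T + (BAC)^T + (CBA)^T + (ABC)^T + (BCA)^T + (CAB)^T]. -/

import Mathlib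

open Matrix

/-- The operator of the transposition `(a b)` on `(ℂ^d)^{⊗4}`. -/
noncomputable def swOp (d : ℕ) (a b : Fin 4) :
    Matrix (Fin 4 → Fin d) (Fin 4 → Fin d) ℂ :=
  Matrix.of fun i j => if ∀ t, i t = j (Equiv.swap a b t) then 1 else 0

/-- The cycle (123) (fixing leg 4) on `(ℂ^d)^{⊗4}`. -/
noncomputable def permOp123of4 (d : ℕ) :
    Matrix (Fin 4 → Fin d) (Fin 4 → Fin d) ℂ :=
  Matrix.of fun i j =>
    if i 0 = j 2 ∧ i 1 = j 0 ∧ i 2 = j 1 ∧ i 3 = j 3 then 1 else 0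

/-- The cycle (132) (fixing leg 4) on `(ℂ^d)^{⊗4}`. -/
noncomputable def permOp132of4 (d : ℕ) :
    Matrix (Fin 4 → Fin d) (Fin 4 → Fin d) ℂ :=
  Matrix.of fun i j =>
    if i 0 = j 1 ∧ i 1 = j 2 ∧ i 2 = j 0 ∧ i 3 = j 3 then 1 else 0

/-- Partial transpose on the fourth tensor factor. -/
noncomputable def pt4 {d : ℕ} (M : Matrix (Fin 4 → Fin d) (Fin 4 → Fin d) ℂ) :
    Matrix (Fin 4 → Fin d) (Fin 4 → Fin d) ℂ :=
  Matrix.of fun i j =>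
    M (Function.update i 3 (j 3)) (Function.update j 3 (i 3))

/-- The operator `F` built from partially transposed permutation operators. -/
noncomputable def Fop (d : ℕ) : Matrix (Fin 4 → Fin d) (Fin 4 → Fin d) ℂ :=
  (6 : ℂ)⁻¹ •
    ((2 : ℂ) • (pt4 (swOp d 0 3) + pt4 (swOp d 1 3) + pt4 (swOp d 2 3)) -
      (permOp123of4 d * pt4 (swOp d 0 3) + permOp123of4 d * pt4 (swOp d 1 3) +
        permOp123of4 d * pt4 (swOp d 2 3) + permOp132of4 d * pt4 (swOp d 0 3) +
        permOp132of4 d * pt4 (swOp d 1 3) + permOp132of4 d * pt4 (swOp d 2 3)))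

/-- `A ⊗ B ⊗ C ⊗ 1` on `(ℂ^d)^{⊗4}`. -/
noncomputable def kron4 {d : ℕ} (A B C : Matrix (Fin d) (Fin d) ℂ) :
    Matrix (Fin 4 → Fin d) (Fin 4 → Fin d) ℂ :=
  Matrix.of fun i j =>
    A (i 0) (j 0) * B (i 1) (j 1) * C (i 2) (j 2) * (if i 3 = j 3 then 1 else 0)

/-- Partial trace over the first three of four tensor factors. -/
noncomputable def ptr123of4 {d : ℕ}
    (M : Matrix (Fin 4 → Fin d) (Fin 4 → Fin d) ℂ) : Matrix (Fin d) (Fin d) ℂ :=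
  Matrix.of fun a b => ∑ x : Fin d, ∑ y : Fin d, ∑ z : Fin d,
    M ![x, y, z, a] ![x, y, z, b]


def e4aux (d : ℕ) : (Fin d × Fin d × Fin d × Fin d) ≃ (Fin 4 → Fin d) where
  toFun p := ![p.1, p.2.1, p.2.2.1, p.2.2.2]
  invFun k := (k 0, k 1, k 2, k 3)
  left_inv p := rfl
  right_inv k := by funext i; fin_cases i <;> rfl

lemma sum_pi4 {d : ℕ} (f : (Fin 4 → Fin d) → ℂ) :
    ∑ k, f k = ∑ a, ∑ b, ∑ c, ∑ e, f ![a,b,c,e] := by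
  rw [← (e4aux d).sum_comp]
  simp [Fintype.sum_prod_type, e4aux]
  rfl

lemma ptr_smul {d : ℕ} (c : ℂ) (M : Matrix (Fin 4 → Fin d) (Fin 4 → Fin d) ℂ) :
    ptr123of4 (c • M) = c • ptr123of4 M := by
  ext a b; simp [ptr123of4, Finset.mul_sum]

lemma ptr_add {d : ℕ} (M N : Matrix (Fin 4 → Fin d) (Fin 4 → Fin d) ℂ) :
    ptr123of4 (M + N) = ptr123of4 M + ptr123of4 N := by
  ext a b; simp [ptr123of4, Finset.sum_add_distrib]

lemma ptr_sub {d : ℕ} (M N : Matrix (Fin 4 → Fin d) (Fin 4 → Fin d) ℂ) :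
    ptr123of4 (M - N) = ptr123of4 M - ptr123of4 N := by
  ext a b; simp [ptr123of4, Finset.sum_sub_distrib]

lemma P1 (d : ℕ) : permOp123of4 d * pt4 (swOp d 0 3) =
    Matrix.of fun i j => if i 1 = i 3 ∧ i 2 = j 1 ∧ i 0 = j 2 ∧ j 3 = j 0 then 1 else 0 := by
  ext i j
  have hv : ∀ (a b c e : Fin d), ![a,b,c,e] 0 = a ∧ ![a,b,c,e] 1 = b ∧ ![a,b,c,e] 2 = c ∧
    ![a,b,c,e] 3 = e := fun _ _ _ _ => ⟨rfl, rfl, rfl, rfl⟩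
  simp only [Matrix.mul_apply, Matrix.of_apply, sum_pi4, pt4, swOp, permOp123of4,
    Fin.forall_fin_succ, hv, -Matrix.cons_val]
  simp [Function.update_apply, Equiv.swap_apply_def,
    show (Fin.succ 2 : Fin 4) = 3 from rfl, ite_and]
  split_ifs <;> simp_all

lemma P2 (d : ℕ) : permOp123of4 d * pt4 (swOp d 1 3) =
    Matrix.of fun i j => if i 1 = j 0 ∧ i 2 = i 3 ∧ i 0 = j 2 ∧ j 1 = j 3 then 1 else 0 := by
  ext i j
  have hv : ∀ (a b c e : Fin d), ![a,b,c,e] 0 = a ∧ ![a,b,c,e] 1 = b ∧ ![a,b,c,e] 2 = c ∧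
    ![a,b,c,e] 3 = e := fun _ _ _ _ => ⟨rfl, rfl, rfl, rfl⟩
  simp only [Matrix.mul_apply, Matrix.of_apply, sum_pi4, pt4, swOp, permOp123of4,
    Fin.forall_fin_succ, hv, -Matrix.cons_val]
  simp [Function.update_apply, Equiv.swap_apply_def,
    show (Fin.succ 2 : Fin 4) = 3 from rfl, ite_and]
  split_ifs <;> simp_all

lemma P3 (d : ℕ) : permOp123of4 d * pt4 (swOp d 2 3) =
    Matrix.of fun i j => if i 1 = j 0 ∧ i 2 = j 1 ∧ i 0 = i 3 ∧ j 2 = j 3 then 1 else 0 := by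
  ext i j
  have hv : ∀ (a b c e : Fin d), ![a,b,c,e] 0 = a ∧ ![a,b,c,e] 1 = b ∧ ![a,b,c,e] 2 = c ∧
    ![a,b,c,e] 3 = e := fun _ _ _ _ => ⟨rfl, rfl, rfl, rfl⟩
  simp only [Matrix.mul_apply, Matrix.of_apply, sum_pi4, pt4, swOp, permOp123of4,
    Fin.forall_fin_succ, hv, -Matrix.cons_val]
  simp [Function.update_apply, Equiv.swap_apply_def,
    show (Fin.succ 2 : Fin 4) = 3 from rfl, ite_and]
  split_ifs <;> simp_all

lemma P4 (d : ℕ) : permOp132of4 d * pt4 (swOp d 0 3) =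
    Matrix.of fun i j => if i 2 = i 3 ∧ i 0 = j 1 ∧ i 1 = j 2 ∧ j 3 = j 0 then 1 else 0 := by
  ext i j
  have hv : ∀ (a b c e : Fin d), ![a,b,c,e] 0 = a ∧ ![a,b,c,e] 1 = b ∧ ![a,b,c,e] 2 = c ∧
    ![a,b,c,e] 3 = e := fun _ _ _ _ => ⟨rfl, rfl, rfl, rfl⟩
  simp only [Matrix.mul_apply, Matrix.of_apply, sum_pi4, pt4, swOp, permOp132of4,
    Fin.forall_fin_succ, hv, -Matrix.cons_val]
  simp [Function.update_apply, Equiv.swap_apply_def,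
    show (Fin.succ 2 : Fin 4) = 3 from rfl, ite_and]
  split_ifs <;> simp_all

lemma P5 (d : ℕ) : permOp132of4 d * pt4 (swOp d 1 3) =
    Matrix.of fun i j => if i 2 = j 0 ∧ i 0 = i 3 ∧ i 1 = j 2 ∧ j 1 = j 3 then 1 else 0 := by
  ext i j
  have hv : ∀ (a b c e : Fin d), ![a,b,c,e] 0 = a ∧ ![a,b,c,e] 1 = b ∧ ![a,b,c,e] 2 = c ∧
    ![a,b,c,e] 3 = e := fun _ _ _ _ => ⟨rfl, rfl, rfl, rfl⟩
  simp only [Matrix.mul_apply, Matrix.of_apply, sum_pi4, pt4, swOp, permOp132of4,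
    Fin.forall_fin_succ, hv, -Matrix.cons_val]
  simp [Function.update_apply, Equiv.swap_apply_def,
    show (Fin.succ 2 : Fin 4) = 3 from rfl, ite_and]
  split_ifs <;> simp_all

lemma P6 (d : ℕ) : permOp132of4 d * pt4 (swOp d 2 3) =
    Matrix.of fun i j => if i 2 = j 0 ∧ i 0 = j 1 ∧ i 1 = i 3 ∧ j 2 = j 3 then 1 else 0 := by
  ext i j
  have hv : ∀ (a b c e : Fin d), ![a,b,c,e] 0 = a ∧ ![a,b,c,e] 1 = b ∧ ![a,b,c,e] 2 = c ∧
    ![a,b,c,e] 3 = e := fun _ _ _ _ => ⟨rfl, rfl, rfl, rfl⟩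
  simp only [Matrix.mul_apply, Matrix.of_apply, sum_pi4, pt4, swOp, permOp132of4,
    Fin.forall_fin_succ, hv, -Matrix.cons_val]
  simp [Function.update_apply, Equiv.swap_apply_def,
    show (Fin.succ 2 : Fin 4) = 3 from rfl, ite_and]
  split_ifs <;> simp_all

lemma L1 (d : ℕ) (A B C : Matrix (Fin d) (Fin d) ℂ) :
    ptr123of4 (pt4 (swOp d 0 3) * kron4 A B C) = (B.trace * C.trace) • Aᵀ := by
  ext a b
  have hv : ∀ (a b c e : Fin d), ![a,b,c,e] 0 = a ∧ ![a,b,c,e] 1 = b ∧ ![a,b,c,e] 2 = c ∧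
    ![a,b,c,e] 3 = e := fun _ _ _ _ => ⟨rfl, rfl, rfl, rfl⟩
  simp only [ptr123of4, Matrix.mul_apply, Matrix.of_apply, sum_pi4, pt4, swOp, kron4,
    Fin.forall_fin_succ, hv, -Matrix.cons_val]
  simp [Function.update_apply, Equiv.swap_apply_def, Matrix.trace, Matrix.diag,
    Finset.mul_sum, Finset.sum_mul, show (Fin.succ 2 : Fin 4) = 3 from rfl, ite_and,
    mul_comm, mul_assoc, mul_left_comm]
  rw [Finset.sum_comm]

lemma L2 (d : ℕ) (A B C : Matrix (Fin d) (Fin d) ℂ) :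
    ptr123of4 (pt4 (swOp d 1 3) * kron4 A B C) = (A.trace * C.trace) • Bᵀ := by
  ext a b
  have hv : ∀ (a b c e : Fin d), ![a,b,c,e] 0 = a ∧ ![a,b,c,e] 1 = b ∧ ![a,b,c,e] 2 = c ∧
    ![a,b,c,e] 3 = e := fun _ _ _ _ => ⟨rfl, rfl, rfl, rfl⟩
  simp only [ptr123of4, Matrix.mul_apply, Matrix.of_apply, sum_pi4, pt4, swOp, kron4,
    Fin.forall_fin_succ, hv, -Matrix.cons_val]
  simp [Function.update_apply, Equiv.swap_apply_def, Matrix.trace, Matrix.diag,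
    Finset.mul_sum, Finset.sum_mul, show (Fin.succ 2 : Fin 4) = 3 from rfl, ite_and,
    mul_comm, mul_assoc, mul_left_comm]
  rw [Finset.sum_comm]

lemma L3 (d : ℕ) (A B C : Matrix (Fin d) (Fin d) ℂ) :
    ptr123of4 (pt4 (swOp d 2 3) * kron4 A B C) = (A.trace * B.trace) • Cᵀ := by
  ext a b
  have hv : ∀ (a b c e : Fin d), ![a,b,c,e] 0 = a ∧ ![a,b,c,e] 1 = b ∧ ![a,b,c,e] 2 = c ∧
    ![a,b,c,e] 3 = e := fun _ _ _ _ => ⟨rfl, rfl, rfl, rfl⟩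
  simp only [ptr123of4, Matrix.mul_apply, Matrix.of_apply, sum_pi4, pt4, swOp, kron4,
    Fin.forall_fin_succ, hv, -Matrix.cons_val]
  simp [Function.update_apply, Equiv.swap_apply_def, Matrix.trace, Matrix.diag,
    Finset.mul_sum, Finset.sum_mul, show (Fin.succ 2 : Fin 4) = 3 from rfl, ite_and,
    mul_comm, mul_assoc, mul_left_comm]
  rw [Finset.sum_comm]

lemma L4 (d : ℕ) (A B C : Matrix (Fin d) (Fin d) ℂ) :
    ptr123of4 (permOp123of4 d * pt4 (swOp d 0 3) * kron4 A B C) = (A * C * B)ᵀ := by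
  rw [P1]
  ext a b
  have hv : ∀ (a b c e : Fin d), ![a,b,c,e] 0 = a ∧ ![a,b,c,e] 1 = b ∧ ![a,b,c,e] 2 = c ∧
    ![a,b,c,e] 3 = e := fun _ _ _ _ => ⟨rfl, rfl, rfl, rfl⟩
  simp only [ptr123of4, Matrix.mul_apply, Matrix.of_apply, sum_pi4, kron4, hv, -Matrix.cons_val]
  simp [ite_and, Matrix.mul_apply, Finset.mul_sum, Finset.sum_mul, mul_comm, mul_assoc,
    mul_left_comm]

lemma L5 (d : ℕ) (A B C : Matrix (Fin d) (Fin d) ℂ) :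
    ptr123of4 (permOp123of4 d * pt4 (swOp d 1 3) * kron4 A B C) = (B * A * C)ᵀ := by
  rw [P2]
  ext a b
  have hv : ∀ (a b c e : Fin d), ![a,b,c,e] 0 = a ∧ ![a,b,c,e] 1 = b ∧ ![a,b,c,e] 2 = c ∧
    ![a,b,c,e] 3 = e := fun _ _ _ _ => ⟨rfl, rfl, rfl, rfl⟩
  simp only [ptr123of4, Matrix.mul_apply, Matrix.of_apply, sum_pi4, kron4, hv, -Matrix.cons_val]
  simp [ite_and, Matrix.mul_apply, Finset.mul_sum, Finset.sum_mul, mul_comm, mul_assoc,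
    mul_left_comm]
  rw [Finset.sum_comm]

lemma L6 (d : ℕ) (A B C : Matrix (Fin d) (Fin d) ℂ) :
    ptr123of4 (permOp123of4 d * pt4 (swOp d 2 3) * kron4 A B C) = (C * B * A)ᵀ := by
  rw [P3]
  ext a b
  have hv : ∀ (a b c e : Fin d), ![a,b,c,e] 0 = a ∧ ![a,b,c,e] 1 = b ∧ ![a,b,c,e] 2 = c ∧
    ![a,b,c,e] 3 = e := fun _ _ _ _ => ⟨rfl, rfl, rfl, rfl⟩
  simp only [ptr123of4, Matrix.mul_apply, Matrix.of_apply, sum_pi4, kron4, hv, -Matrix.cons_val]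
  simp [ite_and, Matrix.mul_apply, Finset.mul_sum, Finset.sum_mul, mul_comm, mul_assoc,
    mul_left_comm]
  rw [Finset.sum_comm]

lemma L7 (d : ℕ) (A B C : Matrix (Fin d) (Fin d) ℂ) :
    ptr123of4 (permOp132of4 d * pt4 (swOp d 0 3) * kron4 A B C) = (A * B * C)ᵀ := by
  rw [P4]
  ext a b
  have hv : ∀ (a b c e : Fin d), ![a,b,c,e] 0 = a ∧ ![a,b,c,e] 1 = b ∧ ![a,b,c,e] 2 = c ∧
    ![a,b,c,e] 3 = e := fun _ _ _ _ => ⟨rfl, rfl, rfl, rfl⟩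
  simp only [ptr123of4, Matrix.mul_apply, Matrix.of_apply, sum_pi4, kron4, hv, -Matrix.cons_val]
  simp [ite_and, Matrix.mul_apply, Finset.mul_sum, Finset.sum_mul, mul_comm, mul_assoc,
    mul_left_comm]

lemma L8 (d : ℕ) (A B C : Matrix (Fin d) (Fin d) ℂ) :
    ptr123of4 (permOp132of4 d * pt4 (swOp d 1 3) * kron4 A B C) = (B * C * A)ᵀ := by
  rw [P5]
  ext a b
  have hv : ∀ (a b c e : Fin d), ![a,b,c,e] 0 = a ∧ ![a,b,c,e] 1 = b ∧ ![a,b,c,e] 2 = c ∧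
    ![a,b,c,e] 3 = e := fun _ _ _ _ => ⟨rfl, rfl, rfl, rfl⟩
  simp only [ptr123of4, Matrix.mul_apply, Matrix.of_apply, sum_pi4, kron4, hv, -Matrix.cons_val]
  simp [ite_and, Matrix.mul_apply, Finset.mul_sum, Finset.sum_mul, mul_comm, mul_assoc,
    mul_left_comm]

lemma L9 (d : ℕ) (A B C : Matrix (Fin d) (Fin d) ℂ) :
    ptr123of4 (permOp132of4 d * pt4 (swOp d 2 3) * kron4 A B C) = (C * A * B)ᵀ := by
  rw [P6]
  ext a b
  have hv : ∀ (a b c e : Fin d), ![a,b,c,e] 0 = a ∧ ![a,b,c,e] 1 = b ∧ ![a,b,c,e] 2 = c ∧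
    ![a,b,c,e] 3 = e := fun _ _ _ _ => ⟨rfl, rfl, rfl, rfl⟩
  simp only [ptr123of4, Matrix.mul_apply, Matrix.of_apply, sum_pi4, kron4, hv, -Matrix.cons_val]
  simp [ite_and, Matrix.mul_apply, Finset.mul_sum, Finset.sum_mul, mul_comm, mul_assoc,
    mul_left_comm]
  rw [Finset.sum_comm]

/-- The positive map induced by the irrep projector `F` evaluated on `A, B, C`. -/
theorem irrep_map_evaluation (d : ℕ) (A B C : Matrix (Fin d) (Fin d) ℂ) :
    ptr123of4 (Fop d * kron4 A B C) =
      (3 : ℂ)⁻¹ • ((B.trace * C.trace) • Aᵀ + (A.trace * C.trace) • Bᵀ +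
          (A.trace * B.trace) • Cᵀ) -
        (6 : ℂ)⁻¹ • ((A * C * B)ᵀ + (B * A * C)ᵀ + (C * B * A)ᵀ +
          (A * B * C)ᵀ + (B * C * A)ᵀ + (C * A * B)ᵀ) := by
  have h : Fop d * kron4 A B C =
      (6 : ℂ)⁻¹ • ((2 : ℂ) • (pt4 (swOp d 0 3) * kron4 A B C +
          pt4 (swOp d 1 3) * kron4 A B C + pt4 (swOp d 2 3) * kron4 A B C) -
        (permOp123of4 d * pt4 (swOp d 0 3) * kron4 A B C +
          permOp123of4 d * pt4 (swOp d 1 3) * kron4 A B C +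
          permOp123of4 d * pt4 (swOp d 2 3) * kron4 A B C +
          permOp132of4 d * pt4 (swOp d 0 3) * kron4 A B C +
          permOp132of4 d * pt4 (swOp d 1 3) * kron4 A B C +
          permOp132of4 d * pt4 (swOp d 2 3) * kron4 A B C)) := by
    simp only [Fop, sub_mul, add_mul, smul_mul_assoc]
  rw [h, ptr_smul, ptr_sub, ptr_smul, ptr_add, ptr_add, ptr_add, ptr_add, ptr_add, ptr_add,
    ptr_add, L1, L2, L3, L4, L5, L6, L7, L8, L9]
  ext i j
  simp only [Matrix.smul_apply, Matrix.add_apply, Matrix.sub_apply, smul_eq_mul]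
  ring
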